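/- Let x⋆ be a mode of f and let −λ⋆ < 0 be the largest eigenvalue of the symmetric matrix ∇²f(x⋆). Then there exists δ⋆ > 0 such that for all sufficiently small η > 0 and every f̃ ∈ F_η: f̃ has exactly one critical point in ball(x⋆, δ⋆); this critical point, denoted x̃⋆, is a local maximum of f̃; and ‖x⋆ − x̃⋆‖² ≤ (16/(3λ⋆))·η. -/

import Mathlib

open Metric Set Filter MeasureTheory Topology
open scoped Topology RealInnerProductSpace

abbrev Euc (d : ℕ) := EuclideanSpace ℝ (Fin d)

/-- The Hessian of `f`, as the derivative of the gradient field. -/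
noncomputable def hess {d : ℕ} (f : Euc d → ℝ) (x : Euc d) : Euc d →L[ℝ] Euc d :=
  fderiv ℝ (gradient f) x

/-- The standing assumptions on the density `f`: nonnegative, integrable, vanishing at
infinity, twice differentiable with bounded and uniformly continuous zeroth, first and
second derivatives, and Morse (nonsingular Hessian at every critical point). -/
def IsNiceDensity {d : ℕ} (f : Euc d → ℝ) : Prop :=
  (∀ x, 0 ≤ f x) ∧
  Integrable f volume ∧
  Tendsto f (cocompact (Euc d)) (𝓝 0) ∧
  Differentiable ℝ f ∧
  Differentiable ℝ (gradient f) ∧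
  (∃ M, ∀ x, |f x| ≤ M) ∧
  (∃ M, ∀ x, ‖gradient f x‖ ≤ M) ∧
  (∃ M, ∀ x, ‖hess f x‖ ≤ M) ∧
  UniformContinuous f ∧
  UniformContinuous (gradient f) ∧
  UniformContinuous (hess f) ∧
  (∀ x, gradient f x = 0 → Function.Bijective (hess f x))

/-- `γ` is the gradient ascent curve of `f` starting at `x`, defined on `[0, ∞)`. -/
def IsGradFlow {d : ℕ} (f : Euc d → ℝ) (x : Euc d) (γ : ℝ → Euc d) : Prop :=
  γ 0 = x ∧ ∀ t ∈ Ici (0:ℝ), HasDerivWithinAt γ (gradient f (γ t)) (Ici 0) t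

/-- `ftil` belongs to the perturbation class `F_η` around `f`: it is twice differentiable with
bounded and uniformly continuous zeroth, first and second derivatives, and is uniformly
`η`-close to `f` together with its first and second derivatives. -/
def InPerturbClass {d : ℕ} (f ftil : Euc d → ℝ) (η : ℝ) : Prop :=
  Differentiable ℝ ftil ∧
  Differentiable ℝ (gradient ftil) ∧
  (∃ M, ∀ x, |ftil x| ≤ M) ∧
  (∃ M, ∀ x, ‖gradient ftil x‖ ≤ M) ∧
  (∃ M, ∀ x, ‖hess ftil x‖ ≤ M) ∧
  UniformContinuous ftil ∧
  UniformContinuous (gradient ftil) ∧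
  UniformContinuous (hess ftil) ∧
  (∀ x, |ftil x - f x| ≤ η) ∧
  (∀ x, ‖gradient ftil x - gradient f x‖ ≤ η) ∧
  (∀ x, ‖hess ftil x - hess f x‖ ≤ η)

-- curve derivative
lemma curve_hasDerivAt {d : ℕ} (x v : Euc d) (t : ℝ) :
    HasDerivAt (fun t : ℝ => x + t • v) v t := by
  simpa using ((hasDerivAt_id t).smul_const v).const_add x

/-- mean value: if the directional quadratic form along the segment is ≤ c, then
`⟪g (x+v), v⟫ ≤ ⟪g x, v⟫ + c`. -/
lemma key_mvt {d : ℕ} (g : Euc d → Euc d) (hg : Differentiable ℝ g) (x v : Euc d) (c : ℝ)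
    (h : ∀ t ∈ Set.Icc (0:ℝ) 1, ⟪fderiv ℝ g (x + t • v) v, v⟫ ≤ c) :
    ⟪g (x + v), v⟫ ≤ ⟪g x, v⟫ + c := by
  set F : ℝ → ℝ := fun t => ⟪g (x + t • v), v⟫ - c * t with hFdef
  have hFd : ∀ t : ℝ, HasDerivAt F (⟪fderiv ℝ g (x + t • v) v, v⟫ - c) t := by
    intro t
    have h1 : HasDerivAt (fun s : ℝ => g (x + s • v)) (fderiv ℝ g (x + t • v) v) t :=
      (hg _).hasFDerivAt.comp_hasDerivAt t (curve_hasDerivAt x v t)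
    have h2 := HasDerivAt.inner ℝ h1 (hasDerivAt_const t v)
    have h3 := (hasDerivAt_id t).const_mul c
    exact (h2.sub h3).congr_deriv (by simp)
  have hanti : AntitoneOn F (Set.Icc (0:ℝ) 1) := by
    apply antitoneOn_of_deriv_nonpos (convex_Icc 0 1)
    · exact fun t _ => ((hFd t).continuousAt).continuousWithinAt
    · exact fun t _ => ((hFd t).differentiableAt).differentiableWithinAt
    · intro t ht
      rw [(hFd t).deriv]
      rw [interior_Icc] at ht
      have := h t ⟨le_of_lt ht.1, le_of_lt ht.2⟩
      linarith
  have := hanti (Set.left_mem_Icc.2 zero_le_one) (Set.right_mem_Icc.2 zero_le_one) zero_le_one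
  simp only [hFdef, one_smul, zero_smul, add_zero, mul_one, mul_zero, sub_zero] at this
  linarith

/-- strong anti-monotonicity of the gradient on a ball where the Hessian quadratic form
is ≤ -K. -/
lemma grad_mono {d : ℕ} (f : Euc d → ℝ) (hg : Differentiable ℝ (gradient f))
    (x₀ : Euc d) (δ K : ℝ)
    (hK : ∀ p ∈ closedBall x₀ δ, ∀ v : Euc d, ⟪(hess f p) v, v⟫ ≤ -K * ‖v‖ ^ 2)
    (x y : Euc d) (hx : x ∈ closedBall x₀ δ) (hy : y ∈ closedBall x₀ δ) :
    ⟪gradient f y - gradient f x, y - x⟫ ≤ -K * ‖y - x‖ ^ 2 := by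
  have hmem : ∀ t ∈ Set.Icc (0:ℝ) 1, x + t • (y - x) ∈ closedBall x₀ δ := fun t ht =>
    (convex_closedBall x₀ δ).add_smul_sub_mem hx hy ht
  have := key_mvt (gradient f) hg x (y - x) (-K * ‖y - x‖ ^ 2)
    (fun t ht => hK _ (hmem t ht) (y - x))
  rw [add_sub_cancel] at this
  rw [inner_sub_left]
  linarith

/-- concavity estimate on the ball. -/
lemma concave_bound {d : ℕ} (f : Euc d → ℝ) (hf : Differentiable ℝ f)
    (hg : Differentiable ℝ (gradient f)) (x₀ : Euc d) (δ K : ℝ)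
    (hK : ∀ p ∈ closedBall x₀ δ, ∀ v : Euc d, ⟪(hess f p) v, v⟫ ≤ -K * ‖v‖ ^ 2)
    (x y : Euc d) (hx : x ∈ closedBall x₀ δ) (hy : y ∈ closedBall x₀ δ) :
    f y ≤ f x + ⟪gradient f x, y - x⟫ - (K / 2) * ‖y - x‖ ^ 2 := by
  set v := y - x with hv
  have hmem : ∀ t ∈ Set.Icc (0:ℝ) 1, x + t • v ∈ closedBall x₀ δ := fun t ht =>
    (convex_closedBall x₀ δ).add_smul_sub_mem hx hy ht
  -- derivative of f along the curve is ⟪gradient f (x+t•v), v⟫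
  have hfd : ∀ t : ℝ, HasDerivAt (fun s : ℝ => f (x + s • v)) (⟪gradient f (x + t • v), v⟫) t := by
    intro t
    have h1 : HasDerivAt (fun s : ℝ => f (x + s • v)) (fderiv ℝ f (x + t • v) v) t :=
      (hf _).hasFDerivAt.comp_hasDerivAt t (curve_hasDerivAt x v t)
    have : ⟪gradient f (x + t • v), v⟫ = fderiv ℝ f (x + t • v) v :=
      InnerProductSpace.toDual_symm_apply
    rwa [this]
  -- pointwise bound on the derivative for t ∈ (0,1]
  have hder_bound : ∀ t ∈ Set.Icc (0:ℝ) 1,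
      ⟪gradient f (x + t • v), v⟫ ≤ ⟪gradient f x, v⟫ + (-K * ‖v‖ ^ 2) * t := by
    intro t ht
    rcases eq_or_lt_of_le ht.1 with h0 | h0
    · simp [← h0]
    · have hkey := key_mvt (gradient f) hg x (t • v) (-K * ‖t • v‖ ^ 2) ?cond
      case cond =>
        intro s hs
        have hmem' : x + s • t • v ∈ closedBall x₀ δ := by
          have : x + (s * t) • v ∈ closedBall x₀ δ :=
            hmem (s * t) ⟨mul_nonneg hs.1 ht.1, by nlinarith [hs.2, ht.2, hs.1, ht.1]⟩
          simpa [mul_smul] using this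
        exact hK _ hmem' (t • v)
      rw [real_inner_smul_right, real_inner_smul_right] at hkey
      have hnorm : ‖t • v‖ ^ 2 = t ^ 2 * ‖v‖ ^ 2 := by
        rw [norm_smul]; rw [Real.norm_eq_abs]; ring_nf; rw [sq_abs]; ring
      rw [hnorm] at hkey
      nlinarith [hkey, h0]
  -- antitone auxiliary function
  set G : ℝ → ℝ := fun t => f (x + t • v) - t * ⟪gradient f x, v⟫ + (K / 2) * t ^ 2 * ‖v‖ ^ 2
    with hGdef
  have hGd : ∀ t : ℝ, HasDerivAt G
      (⟪gradient f (x + t • v), v⟫ - ⟪gradient f x, v⟫ + K * t * ‖v‖ ^ 2) t := by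
    intro t
    have h2 : HasDerivAt (fun t : ℝ => t * ⟪gradient f x, v⟫) (⟪gradient f x, v⟫) t := by
      simpa using (hasDerivAt_id t).mul_const (⟪gradient f x, v⟫)
    have h3 : HasDerivAt (fun t : ℝ => (K / 2) * t ^ 2 * ‖v‖ ^ 2) (K * t * ‖v‖ ^ 2) t := by
      have := ((hasDerivAt_pow 2 t).const_mul (K / 2)).mul_const (‖v‖ ^ 2)
      exact this.congr_deriv (by rw [show (2:ℕ) - 1 = 1 from rfl]; ring)
    have := ((hfd t).sub h2).add h3
    exact this
  have hanti : AntitoneOn G (Set.Icc (0:ℝ) 1) := by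
    apply antitoneOn_of_deriv_nonpos (convex_Icc 0 1)
    · exact fun t _ => ((hGd t).continuousAt).continuousWithinAt
    · exact fun t _ => ((hGd t).differentiableAt).differentiableWithinAt
    · intro t ht
      rw [(hGd t).deriv, interior_Icc] at *
      have := hder_bound t ⟨le_of_lt ht.1, le_of_lt ht.2⟩
      nlinarith [ht.1, ht.2]
  have := hanti (Set.left_mem_Icc.2 zero_le_one) (Set.right_mem_Icc.2 zero_le_one) zero_le_one
  simp only [hGdef, one_smul, zero_smul, add_zero, one_mul, zero_mul, one_pow, mul_zero,
    sub_zero, zero_pow, mul_one] at this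
  have hyx : x + v = y := by rw [hv]; abel
  rw [hyx] at this
  linarith

lemma gradient_eq_zero_of_fderiv {d : ℕ} (g : Euc d → ℝ) (x : Euc d)
    (h : fderiv ℝ g x = 0) : gradient g x = 0 := by
  show (InnerProductSpace.toDual ℝ (Euc d)).symm (fderiv ℝ g x) = 0
  rw [h]; simp


set_option maxHeartbeats 1000000 in
/-- Let `x⋆` be a mode of `f` and `−λ⋆ < 0` the largest eigenvalue of
`∇²f(x⋆)`. Then there is `δ⋆ > 0` such that for all small `η > 0`, every `f̃ ∈ F_η` has a
unique critical point in `ball(x⋆, δ⋆)`; it is a local maximum `x̃⋆` of `f̃` and satisfies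
`‖x⋆ − x̃⋆‖² ≤ (16/(3λ⋆)) η`. -/
theorem perturbed_mode_exists_unique_and_close
    {d : ℕ} (hd : 0 < d) (f : Euc d → ℝ) (hf : IsNiceDensity f)
    (xstar : Euc d) (hmode : IsLocalMax f xstar)
    (lam : ℝ) (hlam : 0 < lam)
    (hlamEig : -lam = sSup {r : ℝ | ∃ v : Euc d, ‖v‖ = 1 ∧ ⟪(hess f xstar) v, v⟫ = r}) :
    ∃ δstar > (0:ℝ), ∃ η₀ > (0:ℝ), ∀ η : ℝ, 0 < η → η ≤ η₀ →
      ∀ ftil : Euc d → ℝ, InPerturbClass f ftil η →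
        ∃ z : Euc d, (z ∈ ball xstar δstar ∧ gradient ftil z = 0) ∧
          (∀ w : Euc d, w ∈ ball xstar δstar → gradient ftil w = 0 → w = z) ∧
          IsLocalMax ftil z ∧
          ‖xstar - z‖ ^ 2 ≤ (16 / (3 * lam)) * η := by
  obtain ⟨-, -, -, hdf, hdg, -, -, -, -, -, huc2, -⟩ := hf
  set H := hess f xstar with hH
  -- Step 1: quadratic form of H is ≤ -lam
  have hHneg : ∀ v : Euc d, ⟪H v, v⟫ ≤ -lam * ‖v‖ ^ 2 := by
    intro v
    rcases eq_or_ne v 0 with rfl | hv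
    · simp
    · have hvpos : (0:ℝ) < ‖v‖ := norm_pos_iff.2 hv
      set u : Euc d := ‖v‖⁻¹ • v with hu
      have hun : ‖u‖ = 1 := by
        rw [hu, norm_smul]
        simp [abs_of_pos (inv_pos.2 hvpos), inv_mul_cancel₀ hvpos.ne']
      have hbdd : BddAbove {r : ℝ | ∃ w : Euc d, ‖w‖ = 1 ∧ ⟪H w, w⟫ = r} := by
        refine ⟨‖H‖, ?_⟩
        rintro r ⟨w, hw, rfl⟩
        calc ⟪H w, w⟫ ≤ ‖H w‖ * ‖w‖ := real_inner_le_norm _ _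
          _ ≤ ‖H‖ * ‖w‖ * ‖w‖ := by
              have := H.le_opNorm w
              nlinarith [norm_nonneg (H w), norm_nonneg w]
          _ ≤ ‖H‖ := by rw [hw, mul_one, mul_one]
      have hle : ⟪H u, u⟫ ≤ -lam := by
        rw [hlamEig]
        exact le_csSup hbdd ⟨u, hun, rfl⟩
      have hexp : ⟪H v, v⟫ = ‖v‖ ^ 2 * ⟪H u, u⟫ := by
        have : v = ‖v‖ • u := by
          rw [hu, smul_smul, mul_inv_cancel₀ hvpos.ne', one_smul]
        conv_lhs => rw [this]
        rw [ContinuousLinearMap.map_smul, real_inner_smul_left, real_inner_smul_right]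
        ring
      rw [hexp]
      nlinarith [sq_nonneg ‖v‖]
  -- Step 2: uniform continuity gives a ball with Hessian quadratic bound
  obtain ⟨δ₁, hδ₁pos, hδ₁⟩ := Metric.uniformContinuous_iff.mp huc2 (lam / 4) (by linarith)
  set δstar := δ₁ / 2 with hδstar
  have hδpos : 0 < δstar := by positivity
  have hquad_f : ∀ p ∈ closedBall xstar δstar, ∀ v : Euc d,
      ⟪(hess f p) v, v⟫ ≤ -(3 * lam / 4) * ‖v‖ ^ 2 := by
    intro p hp v
    have hdist : dist p xstar < δ₁ := lt_of_le_of_lt (mem_closedBall.mp hp) (by linarith)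
    have hnear : ‖hess f p - H‖ < lam / 4 := by
      have := hδ₁ hdist
      rwa [dist_eq_norm] at this
    have hdiff : ⟪(hess f p - H) v, v⟫ ≤ (lam / 4) * ‖v‖ ^ 2 := by
      calc ⟪(hess f p - H) v, v⟫ ≤ ‖(hess f p - H) v‖ * ‖v‖ := real_inner_le_norm _ _
        _ ≤ ‖hess f p - H‖ * ‖v‖ * ‖v‖ := by
            have := (hess f p - H).le_opNorm v
            nlinarith [norm_nonneg v]
        _ ≤ (lam / 4) * ‖v‖ ^ 2 := by nlinarith [norm_nonneg v, sq_nonneg ‖v‖]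
    have hsplit : ⟪(hess f p) v, v⟫ = ⟪H v, v⟫ + ⟪(hess f p - H) v, v⟫ := by
      rw [ContinuousLinearMap.sub_apply, inner_sub_left]; ring
    rw [hsplit]
    have := hHneg v
    nlinarith [sq_nonneg ‖v‖]
  -- Step 3: choose η₀
  refine ⟨δstar, hδpos, min (lam / 4) (3 * lam * δstar ^ 2 / 32), lt_min (by linarith)
    (by positivity), ?_⟩
  intro η hηpos hηle ftil hft
  obtain ⟨htdf, htdg, -, -, -, -, -, -, hc0, -, hc2⟩ := hft
  have hηlam : η ≤ lam / 4 := hηle.trans (min_le_left _ _)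
  have hηδ : η ≤ 3 * lam * δstar ^ 2 / 32 := hηle.trans (min_le_right _ _)
  have hquad_til : ∀ p ∈ closedBall xstar δstar, ∀ v : Euc d,
      ⟪(hess ftil p) v, v⟫ ≤ -(lam / 2) * ‖v‖ ^ 2 := by
    intro p hp v
    have hdiff : ⟪(hess ftil p - hess f p) v, v⟫ ≤ η * ‖v‖ ^ 2 := by
      calc ⟪(hess ftil p - hess f p) v, v⟫ ≤ ‖(hess ftil p - hess f p) v‖ * ‖v‖ :=
            real_inner_le_norm _ _
        _ ≤ ‖hess ftil p - hess f p‖ * ‖v‖ * ‖v‖ := by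
            have := (hess ftil p - hess f p).le_opNorm v
            nlinarith [norm_nonneg v]
        _ ≤ η * ‖v‖ ^ 2 := by nlinarith [hc2 p, norm_nonneg v, sq_nonneg ‖v‖]
    have hsplit : ⟪(hess ftil p) v, v⟫ = ⟪(hess f p) v, v⟫ +
        ⟪(hess ftil p - hess f p) v, v⟫ := by
      rw [ContinuousLinearMap.sub_apply, inner_sub_left]; ring
    rw [hsplit]
    have := hquad_f p hp v
    nlinarith [sq_nonneg ‖v‖]
  -- gradient of f vanishes at xstar
  have hgrad0 : gradient f xstar = 0 :=
    gradient_eq_zero_of_fderiv f xstar hmode.fderiv_eq_zero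
  -- Taylor bound for f on the ball
  have hfquad : ∀ y ∈ closedBall xstar δstar,
      f y ≤ f xstar - (3 * lam / 8) * ‖y - xstar‖ ^ 2 := by
    intro y hy
    have := concave_bound f hdf hdg xstar δstar (3 * lam / 4) hquad_f xstar y
      (mem_closedBall_self hδpos.le) hy
    rw [hgrad0] at this
    simp only [inner_zero_left] at this
    linarith
  -- maximize ftil on the closed ball
  obtain ⟨z, hzcb, hzmax⟩ := (isCompact_closedBall xstar δstar).exists_isMaxOn
    ⟨xstar, mem_closedBall_self hδpos.le⟩ htdf.continuous.continuousOn
  -- distance bound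
  have hzx : ftil xstar ≤ ftil z := hzmax (mem_closedBall_self hδpos.le)
  have h1 : ftil z ≤ f z + η := by have := abs_le.mp (hc0 z); linarith
  have h2 : f xstar - η ≤ ftil xstar := by have := abs_le.mp (hc0 xstar); linarith
  have hq : (3 * lam / 8) * ‖z - xstar‖ ^ 2 ≤ 2 * η := by
    have := hfquad z hzcb
    linarith
  have hdistsq : ‖z - xstar‖ ^ 2 ≤ (16 / (3 * lam)) * η := by
    rw [div_mul_eq_mul_div, le_div_iff₀ (by linarith : (0:ℝ) < 3 * lam)]
    nlinarith
  -- z is inside the open ball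
  have hzball : z ∈ ball xstar δstar := by
    rw [mem_ball, dist_eq_norm]
    have hlt : ‖z - xstar‖ ^ 2 < δstar ^ 2 := by
      have : (16 / (3 * lam)) * η ≤ δstar ^ 2 / 2 := by
        rw [div_mul_eq_mul_div, div_le_div_iff₀ (by linarith : (0:ℝ) < 3 * lam) two_pos]
        nlinarith
      nlinarith [sq_nonneg δstar]
    exact lt_of_pow_lt_pow_left₀ 2 hδpos.le hlt
  -- local max
  have hlocmax : IsLocalMax ftil z :=
    hzmax.isLocalMax (mem_of_superset (isOpen_ball.mem_nhds hzball) ball_subset_closedBall)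
  -- critical point
  have hgradz : gradient ftil z = 0 :=
    gradient_eq_zero_of_fderiv ftil z hlocmax.fderiv_eq_zero
  refine ⟨z, ⟨hzball, hgradz⟩, ?_, hlocmax, ?_⟩
  · intro w hw hgw
    have := grad_mono ftil htdg xstar δstar (lam / 2) hquad_til z w
      (ball_subset_closedBall hzball) (ball_subset_closedBall hw)
    rw [hgw, hgradz] at this
    simp only [sub_zero, inner_zero_left] at this
    have hwz : ‖w - z‖ ^ 2 ≤ 0 := by nlinarith
    have : ‖w - z‖ = 0 := by nlinarith [norm_nonneg (w - z), sq_nonneg ‖w - z‖]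
    have := norm_sub_eq_zero_iff.mp this
    exact this
  · rw [norm_sub_rev]
    exact hdistsq
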